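/- Let b ≥ 2 be an integer. For any real number η > 2/3, the real number ∑_{j≥1} b^{-n_j}, where n_j = 2^{[j^η]} for j ≥ 1 and [·] denotes the integer part, is transcendental. -/

import Mathlib

open scoped ENNReal NNReal

namespace Stmt2Aux


/-- binary weight: sum of binary digits -/
def w (x : ℕ) : ℕ := (Nat.digits 2 x).sum

lemma w_zero : w 0 = 0 := by simp [w]

lemma w_eq (e : ℕ) : w e = e % 2 + w (e / 2) := by
  rcases Nat.eq_zero_or_pos e with h | h
  · subst h; simp [w]
  · unfold w
    rw [Nat.digits_def' (by norm_num : 1 < 2) h, List.sum_cons]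

lemma w_one : w 1 = 1 := by simp [w]

lemma w_pos {e : ℕ} (he : 0 < e) : 1 ≤ w e := by
  induction e using Nat.strong_induction_on with
  | _ e ih =>
    rw [w_eq]
    rcases Nat.even_or_odd e with he2 | he2
    · have h2 : 0 < e / 2 := by
        rcases he2 with ⟨t, ht⟩; omega
      have := ih (e / 2) (by omega) h2
      omega
    · have : e % 2 = 1 := Nat.odd_iff.mp he2
      omega

lemma w_mul_pow_add (u t : ℕ) : ∀ e, e < 2 ^ t → w (u * 2 ^ t + e) = w u + w e := by
  induction t generalizing u with
  | zero =>
    intro e he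
    interval_cases e
    simp [w_zero]
  | succ t ih =>
    intro e he
    rcases Nat.eq_zero_or_pos u with hu | hu
    · subst hu; simp [w_zero]
    · have hne : u * 2 ^ (t + 1) + e ≠ 0 := by
        have : 0 < 2 ^ (t + 1) := Nat.pow_pos (by norm_num)
        positivity
      have hmod : (u * 2 ^ (t + 1) + e) % 2 = e % 2 := by
        have : u * 2 ^ (t + 1) = (u * 2 ^ t) * 2 := by ring
        omega
      have hdiv : (u * 2 ^ (t + 1) + e) / 2 = u * 2 ^ t + e / 2 := by
        have h1 : u * 2 ^ (t + 1) = (u * 2 ^ t) * 2 := by ring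
        omega
      rw [w_eq (u * 2 ^ (t + 1) + e), hmod, hdiv,
        ih u (e / 2) (by have : 0 < 2 ^ t := Nat.pow_pos (by norm_num); omega)]
      have := w_eq e
      omega

lemma w_pow (t : ℕ) : w (2 ^ t) = 1 := by
  have := w_mul_pow_add 1 t 0 (Nat.pow_pos (by norm_num))
  simpa [w_zero, w_one] using this

lemma w_succ_le (x : ℕ) : w (x + 1) ≤ w x + 1 := by
  induction x using Nat.strong_induction_on with
  | _ x ih =>
    rcases Nat.even_or_odd x with hx | hx
    · -- even: equality
      have h1 : (x + 1) % 2 = 1 := by rcases hx with ⟨t, ht⟩; omega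
      have h2 : (x + 1) / 2 = x / 2 := by rcases hx with ⟨t, ht⟩; omega
      rw [w_eq (x + 1), h1, h2]
      have := w_eq x
      have h3 : x % 2 = 0 := by rcases hx with ⟨t, ht⟩; omega
      omega
    · rcases Nat.eq_zero_or_pos x with h0 | h0
    
      · subst h0; simp [w_zero, w_one]
      · have h1 : (x + 1) % 2 = 0 := by
          have := Nat.odd_iff.mp hx; omega
        have hodd := Nat.odd_iff.mp hx
        have h2 : (x + 1) / 2 = x / 2 + 1 := by omega
        rw [w_eq (x + 1), h1, h2]
        have h3 := ih (x / 2) (by omega)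
        have h4 := w_eq x
        omega

lemma w_add_pow_le (e : ℕ) : ∀ x, w (x + 2 ^ e) ≤ w x + 1 := by
  induction e with
  | zero => intro x; simpa using w_succ_le x
  | succ e ih =>
    intro x
    have hmod : (x + 2 ^ (e + 1)) % 2 = x % 2 := by
      have : 2 ^ (e + 1) = 2 ^ e * 2 := by ring
      omega
    have hdiv : (x + 2 ^ (e + 1)) / 2 = x / 2 + 2 ^ e := by
      have : 2 ^ (e + 1) = 2 ^ e * 2 := by ring
      omega
    rw [w_eq (x + 2 ^ (e + 1)), hmod, hdiv]
    have := ih (x / 2)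
    have := w_eq x
    omega

lemma w_sum_pows_le (k : ℕ) (f : Fin k → ℕ) : w (∑ i, 2 ^ f i) ≤ k := by
  induction k with
  | zero => simp [w_zero]
  | succ k ih =>
    rw [Fin.sum_univ_succ]
    have h1 : 2 ^ f 0 + ∑ i : Fin k, 2 ^ f i.succ = (∑ i : Fin k, 2 ^ f i.succ) + 2 ^ f 0 := by ring
    rw [h1]
    calc w ((∑ i : Fin k, 2 ^ f i.succ) + 2 ^ f 0) ≤ w (∑ i : Fin k, 2 ^ f i.succ) + 1 :=
          w_add_pow_le _ _
      _ ≤ k + 1 := by have := ih (fun i => f i.succ); omega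


/-- Main structural lemma on sums of distinct powers of two plus a small remainder. -/
lemma Qlem : ∀ (n : ℕ) (v : Fin n → ℕ), StrictMono v → ∀ e B, (∀ i, v i < B) → e < 2 ^ B →
    (∀ h : 0 < n, e < 2 ^ v ⟨0, h⟩) →
    w (∑ i, 2 ^ v i + e) = n + w e ∧ ∑ i, 2 ^ v i + e < 2 ^ B := by
  intro n
  induction n with
  | zero => intro v hv e B hB heB h0; simpa using heB
  | succ n ih =>
    intro v hv e B hB heB h0
    have hlast : ∀ i : Fin n, v i.castSucc < v (Fin.last n) :=
      fun i => hv (Fin.castSucc_lt_last i)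
    have hv' : StrictMono (fun i : Fin n => v i.castSucc) :=
      fun i j hij => hv (by simpa using hij)
    have he0 : e < 2 ^ v 0 := h0 (Nat.succ_pos n)
    have hv0last : v 0 ≤ v (Fin.last n) := hv.monotone (Fin.zero_le _)
    have ihh := ih (fun i : Fin n => v i.castSucc) hv' e (v (Fin.last n)) hlast
      (lt_of_lt_of_le he0 (Nat.pow_le_pow_right (by norm_num) hv0last))
      (fun h => by
        show e < 2 ^ v (Fin.castSucc ⟨0, h⟩)
        have h00 : (Fin.castSucc (⟨0, h⟩ : Fin n)) = (0 : Fin (n+1)) := by ext; simp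
        rw [h00]; exact he0)
    obtain ⟨ihw0, ihb0⟩ := ihh
    have ihw : w ((∑ i : Fin n, 2 ^ v i.castSucc) + e) = n + w e := by simpa using ihw0
    have ihb : (∑ i : Fin n, 2 ^ v i.castSucc) + e < 2 ^ v (Fin.last n) := by simpa using ihb0
    rw [Fin.sum_univ_castSucc]
    have harr : (∑ i : Fin n, 2 ^ v i.castSucc) + 2 ^ v (Fin.last n) + e
        = 1 * 2 ^ v (Fin.last n) + ((∑ i : Fin n, 2 ^ v i.castSucc) + e) := by ring
    constructor
    · rw [harr, w_mul_pow_add 1 _ _ ihb, w_one,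
        ihw]
      omega
    · have hlB : v (Fin.last n) < B := hB (Fin.last n)
      have h2 : 2 ^ (v (Fin.last n) + 1) ≤ 2 ^ B := Nat.pow_le_pow_right (by norm_num) hlB
      have : (∑ i : Fin n, 2 ^ v i.castSucc) + 2 ^ v (Fin.last n) + e
          < 2 ^ v (Fin.last n) + 2 ^ v (Fin.last n) := by omega
      have h3 : 2 ^ v (Fin.last n) + 2 ^ v (Fin.last n) = 2 ^ (v (Fin.last n) + 1) := by ring
      omega

lemma w_sum_add (n : ℕ) (v : Fin n → ℕ) (hv : StrictMono v) (e : ℕ)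
    (he : ∀ h : 0 < n, e < 2 ^ v ⟨0, h⟩) :
    w (∑ i, 2 ^ v i + e) = n + w e := by
  cases n with
  | zero => simpa using (by simp : w (0 + e) = w e)
  | succ n =>
    refine (Qlem (n+1) v hv e (v (Fin.last n) + 1)
      (fun i => Nat.lt_succ_of_le (hv.monotone (Fin.le_last i))) ?_ he).1
    have h1 := he (Nat.succ_pos n)
    have h2 : v ⟨0, Nat.succ_pos n⟩ ≤ v (Fin.last n) := hv.monotone (Fin.le_last _)
    calc e < 2 ^ v ⟨0, Nat.succ_pos n⟩ := h1
      _ ≤ 2 ^ (v (Fin.last n) + 1) := Nat.pow_le_pow_right (by norm_num) (by omega)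

lemma w_sum_distinct (n : ℕ) (v : Fin n → ℕ) (hv : StrictMono v) :
    w (∑ i, 2 ^ v i) = n := by
  have := w_sum_add n v hv 0 (fun h => Nat.pow_pos (by norm_num))
  simpa [w_zero] using this

lemma sum_distinct_lt (n : ℕ) (v : Fin n → ℕ) (hv : StrictMono v) (B : ℕ)
    (hB : ∀ i, v i < B) : ∑ i, 2 ^ v i < 2 ^ B := by
  cases n with
  | zero => simpa using Nat.pow_pos (n := B) (by norm_num)
  | succ n =>
    have := (Qlem (n+1) v hv 0 B hB (Nat.pow_pos (by norm_num))
      (fun h => Nat.pow_pos (by norm_num))).2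
    simpa using this

/-- gap above: adding a small positive remainder to S* bumps the weight above n -/
lemma gap_above (n : ℕ) (v : Fin n.succ → ℕ) (hv : StrictMono v) (e : ℕ)
    (he : e < 2 ^ v 0) :
    w (∑ i, 2 ^ v i + e) = n.succ + w e :=
  w_sum_add n.succ v hv e (fun _ => he)

/-- gap below: subtracting a small positive amount from S* bumps the weight above n -/
lemma gap_below (n : ℕ) (v : Fin n.succ → ℕ) (hv : StrictMono v) (s e : ℕ)
    (he : 0 < e) (he2 : 2 * e < 2 ^ v 0) (hs : s + e = ∑ i, 2 ^ v i) :
    n + 2 ≤ w s := by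
  -- v 0 ≥ 1
  have hv0 : 1 ≤ v 0 := by
    by_contra h
    have : v 0 = 0 := by omega
    rw [this] at he2; simp at he2; omega
  have hsplit : ∑ i, 2 ^ v i = 2 ^ v 0 + ∑ i : Fin n, 2 ^ v i.succ :=
    Fin.sum_univ_succ _
  set rest := ∑ i : Fin n, 2 ^ v i.succ with hrest
  have hepow : e ≤ 2 ^ v 0 := by omega
  set d := 2 ^ v 0 - e with hd
  have hsd : s = rest + d := by omega
  -- w d ≥ 2 : d ∈ (2^(v0 -1), 2^(v0))
  have hpow2 : 2 ^ v 0 = 2 ^ (v 0 - 1) * 2 := by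
    rw [← pow_succ]
    congr 1
    omega
  have hd_lb : 2 ^ (v 0 - 1) < d := by omega
  have hd_ub : d < 2 ^ v 0 := by omega
  set e2 := d - 2 ^ (v 0 - 1) with he2d
  have he2pos : 0 < e2 := by omega
  have he2lt : e2 < 2 ^ (v 0 - 1) := by omega
  have hdw : w d = 1 + w e2 := by
    have : d = 1 * 2 ^ (v 0 - 1) + e2 := by omega
    rw [this, w_mul_pow_add 1 _ _ he2lt, w_one]
  have hwd2 : 2 ≤ w d := by
    have := w_pos he2pos
    omega
  -- w s = n + w d
  have hv' : StrictMono (fun i : Fin n => v i.succ) :=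
    fun i j hij => hv (by simpa using hij)
  have hws : w (rest + d) = n + w d := by
    apply w_sum_add n _ hv' d
    intro h
    have : v 0 < v (⟨0, h⟩ : Fin n).succ := hv (by simp [Fin.lt_def])
    calc d < 2 ^ v 0 := hd_ub
      _ ≤ 2 ^ v (⟨0, h⟩ : Fin n).succ := Nat.pow_le_pow_right (by norm_num) (le_of_lt this)
  rw [hsd, hws]
  omega





section Core

variable (b : ℕ) (a : ℕ → ℕ)

/-- exponents -/
def E (j : ℕ) : ℕ := 2 ^ a j

/-- base -/
noncomputable def bb : ℝ≥0∞ := (b : ℝ≥0∞)⁻¹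

/-- exponent sum of a tuple -/
def SF (k : ℕ) (f : Fin k → ℕ) : ℕ := ∑ i, E a (f i)

/-- the number, in `ℝ≥0∞` -/
noncomputable def X : ℝ≥0∞ := ∑' j, bb b ^ E a j

/-- splitting equivalence -/
def finSplit (k : ℕ) : (Fin (k+1) → ℕ) ≃ ℕ × (Fin k → ℕ) where
  toFun g := (g 0, fun i => g i.succ)
  invFun p := Fin.cons p.1 p.2
  left_inv g := by
    funext i
    exact Fin.cases rfl (fun j => rfl) i
  right_inv p := by
    ext i
    · rfl
    · simp

lemma Xpow (k : ℕ) : X b a ^ k = ∑' f : Fin k → ℕ, bb b ^ SF a k f := by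
  induction k with
  | zero =>
    rw [pow_zero, tsum_eq_single (fun _ : Fin 0 => 0)
      (fun f hf => absurd (Subsingleton.elim f _) hf)]
    simp [SF]
  | succ k ih =>
    rw [pow_succ', ih, X, ← ENNReal.tsum_mul_right]
    have h1 : ∀ j : ℕ, bb b ^ E a j * (∑' f : Fin k → ℕ, bb b ^ SF a k f)
        = ∑' f : Fin k → ℕ, bb b ^ (E a j + SF a k f) := by
      intro j
      rw [← ENNReal.tsum_mul_left]
      exact tsum_congr fun f => (pow_add _ _ _).symm
    rw [tsum_congr h1, ← ENNReal.tsum_prod (f := fun j f => bb b ^ (E a j + SF a k f)),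
      ← (finSplit k).tsum_eq (fun p => bb b ^ (E a p.1 + SF a k p.2))]
    apply tsum_congr
    intro g
    congr 1
    show E a (g 0) + SF a k (fun i => g i.succ) = SF a (k+1) g
    exact (Fin.sum_univ_succ fun i => E a (g i)).symm

variable (J₀ : ℕ) (hJ : ∀ j, J₀ ≤ j → j + 1 ≤ E a j)

include hJ in
lemma index_bound {k S : ℕ} (f : Fin k → ℕ) (hf : SF a k f = S) (i : Fin k) :
    f i < J₀ + S := by
  have h1 : E a (f i) ≤ S := by
    rw [← hf]
    exact Finset.single_le_sum (f := fun i => E a (f i)) (fun _ _ => Nat.zero_le _)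
      (Finset.mem_univ i)
  rcases lt_or_ge (f i) J₀ with h | h
  · omega
  · have := hJ (f i) h
    omega

include hJ in
lemma levelFinite (k L : ℕ) : {f : Fin k → ℕ | SF a k f ≤ L}.Finite := by
  apply Set.Finite.subset (Set.Finite.pi (t := fun _ : Fin k => Set.Iio (J₀ + L))
    (fun _ => Set.finite_Iio _))
  intro f hf
  simp only [Set.mem_pi, Set.mem_univ, Set.mem_Iio, forall_true_left]
  intro i
  have h1 : E a (f i) ≤ SF a k f :=
    Finset.single_le_sum (f := fun i => E a (f i)) (fun _ _ => Nat.zero_le _)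
      (Finset.mem_univ i)
  have h2 : SF a k f ≤ L := hf
  rcases lt_or_ge (f i) J₀ with h | h
  · omega
  · have := hJ (f i) h
    omega

include hJ in
lemma cardFiber (k S : ℕ) : Nat.card {f : Fin k → ℕ // SF a k f = S} ≤ (J₀ + S) ^ k := by
  have hinj : Function.Injective
      (fun f : {f : Fin k → ℕ // SF a k f = S} =>
        (fun i => (⟨f.val i, index_bound a J₀ hJ f.val f.prop i⟩ : Fin (J₀ + S))
          : Fin k → Fin (J₀ + S))) := by
    intro f g hfg
    apply Subtype.ext
    funext i
    have := congrFun hfg i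
    simpa using this
  calc Nat.card {f : Fin k → ℕ // SF a k f = S}
      ≤ Nat.card (Fin k → Fin (J₀ + S)) := Nat.card_le_card_of_injective _ hinj
    _ = (J₀ + S) ^ k := by simp [Nat.card_eq_fintype_card]

include hJ in
lemma fiberFinite (k S : ℕ) : Finite {f : Fin k → ℕ // SF a k f = S} := by
  have : {f : Fin k → ℕ | SF a k f = S} ⊆ {f | SF a k f ≤ S} := fun f hf => le_of_eq hf
  exact (Set.Finite.subset (levelFinite a J₀ hJ k S) this).to_subtype

/-- the constant κ -/
noncomputable def kap (n : ℕ) : ℝ≥0∞ := ∑' d : ℕ, ((d : ℝ≥0∞) + 1) ^ n * 2⁻¹ ^ d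

lemma kap_ne_top (n : ℕ) : kap n ≠ ⊤ := by
  have h1 : ∀ d : ℕ, ((d : ℝ≥0∞) + 1) ^ n * 2⁻¹ ^ d
      = ((((d : ℝ≥0) + 1) ^ n * 2⁻¹ ^ d : ℝ≥0) : ℝ≥0∞) := by
    intro d
    rw [ENNReal.coe_mul, ENNReal.coe_pow, ENNReal.coe_pow, ENNReal.coe_add,
      ENNReal.coe_inv (by norm_num), ENNReal.coe_natCast, ENNReal.coe_one, ENNReal.coe_ofNat]
  rw [kap, tsum_congr h1]
  rw [ENNReal.tsum_coe_ne_top_iff_summable]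
  have h2 : Summable (fun d : ℕ => ((d + 1 : ℝ) ^ n * 2⁻¹ ^ d)) := by
    have h3 : Summable (fun d : ℕ => ((d : ℝ) ^ n * 2⁻¹ ^ d)) :=
      summable_pow_mul_geometric_of_norm_lt_one n (by norm_num)
    have h4 := (summable_nat_add_iff 1).mpr h3
    have h5 : ∀ d : ℕ, ((d + 1 : ℝ) ^ n * 2⁻¹ ^ d) = 2 * ((↑(d + 1) : ℝ) ^ n * 2⁻¹ ^ (d + 1)) := by
      intro d
      push_cast
      ring
    rw [funext h5]
    exact h4.mul_left 2
  rw [← NNReal.summable_coe]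
  convert h2 using 2 with d
  norm_cast

lemma bb_le_half (hb : 2 ≤ b) : bb b ≤ 2⁻¹ := by
  apply ENNReal.inv_le_inv'
  exact_mod_cast hb

lemma bb_le_one (hb : 2 ≤ b) : bb b ≤ 1 := by
  rw [bb, ENNReal.inv_le_one]
  exact_mod_cast Nat.one_le_of_lt hb

lemma bb_pow_ne_top (hb : 2 ≤ b) (s : ℕ) : bb b ^ s ≠ ⊤ :=
  ENNReal.pow_ne_top (ENNReal.inv_ne_top.mpr (Nat.cast_ne_zero.mpr (by omega)))

include hJ in
lemma X_ne_top (hb : 2 ≤ b) : X b a ≠ ⊤ := by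
  have hle : X b a ≤ (J₀ : ℝ≥0∞) + 2 := by
    have h1 : ∀ j : ℕ, bb b ^ E a j ≤ (if j < J₀ then 1 else 0) + 2⁻¹ ^ (j + 1) := by
      intro j
      rcases lt_or_ge j J₀ with h | h
      · rw [if_pos h]
        calc bb b ^ E a j ≤ 1 := pow_le_one' (bb_le_one b hb) _
          _ ≤ 1 + 2⁻¹ ^ (j+1) := le_self_add
      · rw [if_neg (not_lt.mpr h), zero_add]
        have h2 : j + 1 ≤ E a j := hJ j h
        calc bb b ^ E a j ≤ 2⁻¹ ^ E a j := pow_le_pow_left' (bb_le_half b hb) _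
          _ = 2⁻¹ ^ (j+1) * 2⁻¹ ^ (E a j - (j+1)) := by
              rw [← pow_add]
              congr 1
              omega
          _ ≤ 2⁻¹ ^ (j+1) * 1 := by
              apply mul_le_mul_right
              exact pow_le_one' (by norm_num) _
          _ = 2⁻¹ ^ (j+1) := mul_one _
    calc X b a ≤ ∑' j, ((if j < J₀ then 1 else 0) + 2⁻¹ ^ (j + 1)) :=
          ENNReal.tsum_le_tsum h1
      _ = (∑' j, (if j < J₀ then (1:ℝ≥0∞) else 0)) + ∑' j : ℕ, 2⁻¹ ^ (j + 1) :=
          ENNReal.tsum_add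
      _ ≤ (J₀ : ℝ≥0∞) + 2 := by
          apply add_le_add
          · rw [tsum_eq_sum (s := Finset.range J₀) (fun j hj => if_neg (by
              simpa using hj))]
            rw [Finset.sum_congr rfl (fun j hj => if_pos (Finset.mem_range.mp hj))]
            simp
          · calc (∑' j : ℕ, (2⁻¹ : ℝ≥0∞) ^ (j + 1)) ≤ ∑' j : ℕ, 2⁻¹ ^ j :=
                  ENNReal.tsum_le_tsum (fun j => pow_le_pow_right_of_le_one' (by norm_num) (by omega))
              _ = (1 - 2⁻¹)⁻¹ := ENNReal.tsum_geometric _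
              _ = 2 := by rw [ENNReal.one_sub_inv_two]; exact inv_inv _
  exact ne_top_of_le_ne_top (by simp [ENNReal.add_ne_top]) hle

/-- the tail, in `ℝ≥0∞` -/
noncomputable def TL (k L : ℕ) : ℝ≥0∞ :=
  ∑' f : Fin k → ℕ, if L < SF a k f then bb b ^ SF a k f else 0

include hJ in
lemma TL_le_Xpow (k L : ℕ) : TL b a k L ≤ X b a ^ k := by
  rw [Xpow]
  apply ENNReal.tsum_le_tsum
  intro f
  split_ifs <;> simp

include hJ in
lemma decompR (hb : 2 ≤ b) (k L : ℕ) : ∃ N : ℕ,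
    (b:ℝ)^L * (X b a ^ k).toReal = (N:ℝ) + (b:ℝ)^L * (TL b a k L).toReal := by
  classical
  set Fs := (levelFinite a J₀ hJ k L).toFinset with hFs
  set head : ℝ≥0∞ := ∑ f ∈ Fs, bb b ^ SF a k f with hhead
  have hXk : X b a ^ k = head + TL b a k L := by
    rw [Xpow, TL]
    have h1 : ∀ f : Fin k → ℕ, bb b ^ SF a k f
        = (if SF a k f ≤ L then bb b ^ SF a k f else 0)
          + (if L < SF a k f then bb b ^ SF a k f else 0) := by
      intro f
      rcases le_or_gt (SF a k f) L with h | h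
      · rw [if_pos h, if_neg (not_lt.mpr h), add_zero]
      · rw [if_neg (not_le.mpr h), if_pos h, zero_add]
    rw [tsum_congr h1, ENNReal.tsum_add]
    congr 1
    rw [tsum_eq_sum (s := Fs) (fun f hf => if_neg (by
      rw [hFs, Set.Finite.mem_toFinset] at hf
      exact hf))]
    apply Finset.sum_congr rfl
    intro f hf
    rw [hFs, Set.Finite.mem_toFinset] at hf
    exact if_pos hf
  have hXne : X b a ^ k ≠ ⊤ := ENNReal.pow_ne_top (X_ne_top b a J₀ hJ hb)
  have hTLne : TL b a k L ≠ ⊤ := ne_top_of_le_ne_top hXne (TL_le_Xpow b a J₀ hJ k L)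
  have hheadne : head ≠ ⊤ := by
    apply ne_top_of_le_ne_top hXne
    rw [hXk]
    exact le_self_add
  have hbR : (b:ℝ) ≠ 0 := by
    have : (0:ℝ) < b := by exact_mod_cast (by omega : 0 < b)
    exact ne_of_gt this
  refine ⟨∑ f ∈ Fs, b ^ (L - SF a k f), ?_⟩
  have htoReal : (X b a ^ k).toReal = head.toReal + (TL b a k L).toReal := by
    rw [hXk, ENNReal.toReal_add hheadne hTLne]
  rw [htoReal, mul_add]
  congr 1
  have hterm : ∀ s : ℕ, (bb b ^ s).toReal = ((b:ℝ)⁻¹) ^ s := by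
    intro s
    rw [ENNReal.toReal_pow, bb, ENNReal.toReal_inv]
    norm_num
  rw [hhead, ENNReal.toReal_sum (fun f _ => bb_pow_ne_top b hb _), Finset.mul_sum,
    Nat.cast_sum]
  apply Finset.sum_congr rfl
  intro f hf
  rw [hFs, Set.Finite.mem_toFinset] at hf
  rw [hterm]
  have hSL : SF a k f ≤ L := hf
  have hsplit : (b:ℝ)^L = (b:ℝ)^(L - SF a k f) * (b:ℝ)^(SF a k f) := by
    rw [← pow_add]
    congr 1
    omega
  rw [hsplit, inv_pow, mul_assoc, mul_inv_cancel₀ (pow_ne_zero _ hbR), mul_one]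
  push_cast
  ring

include hJ in
lemma TSbound (hb : 2 ≤ b) (n k Q : ℕ) (hk : k ≤ n) (hQ : 1 ≤ Q) :
    (∑' f : Fin k → ℕ, if Q ≤ SF a k f then bb b ^ SF a k f else 0)
      ≤ bb b ^ Q * ((J₀ + Q : ℕ) : ℝ≥0∞) ^ n * kap n := by
  classical
  -- step 1 : rewrite as a sum over a subtype
  have h1 : (∑' f : Fin k → ℕ, if Q ≤ SF a k f then bb b ^ SF a k f else 0)
      = ∑' f : {f : Fin k → ℕ // Q ≤ SF a k f}, bb b ^ SF a k f.val := by
    calc (∑' f : Fin k → ℕ, if Q ≤ SF a k f then bb b ^ SF a k f else 0)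
        = ∑' f : Fin k → ℕ,
            Set.indicator {f : Fin k → ℕ | Q ≤ SF a k f} (fun f => bb b ^ SF a k f) f := by
          apply tsum_congr
          intro f
          by_cases h : Q ≤ SF a k f
          · rw [if_pos h]
            exact (Set.indicator_of_mem h _).symm
          · rw [if_neg h]
            exact (Set.indicator_of_notMem h _).symm
      _ = ∑' f : {f : Fin k → ℕ // Q ≤ SF a k f}, bb b ^ SF a k f.val :=
          (tsum_subtype _ _).symm
  rw [h1]
  -- step 2 : compare with the sigma-type sum
  have h2 : (∑' f : {f : Fin k → ℕ // Q ≤ SF a k f}, bb b ^ SF a k f.val)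
      ≤ ∑' s : Σ d : ℕ, {f : Fin k → ℕ // SF a k f = Q + d}, bb b ^ (Q + s.fst) := by
    apply Summable.tsum_le_tsum_of_inj
      (fun f : {f : Fin k → ℕ // Q ≤ SF a k f} =>
        (⟨SF a k f.val - Q, ⟨f.val, by have := f.prop; omega⟩⟩
          : Σ d : ℕ, {f : Fin k → ℕ // SF a k f = Q + d}))
    · intro f g hfg
      apply Subtype.ext
      exact congrArg (fun s : (Σ d : ℕ, {f : Fin k → ℕ // SF a k f = Q + d}) => s.snd.val) hfg
    · intro c _
      exact zero_le
    · intro f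
      have hf := f.prop
      apply le_of_eq
      show bb b ^ SF a k f.val = bb b ^ (Q + (SF a k f.val - Q))
      congr 1
      omega
    · exact ENNReal.summable
    · exact ENNReal.summable
  -- step 3 : evaluate the sigma sum fiberwise
  have h3 : (∑' s : Σ d : ℕ, {f : Fin k → ℕ // SF a k f = Q + d}, bb b ^ (Q + s.fst))
      = ∑' d : ℕ, (Nat.card {f : Fin k → ℕ // SF a k f = Q + d} : ℝ≥0∞) * bb b ^ (Q + d) := by
    rw [ENNReal.tsum_sigma' (fun s => bb b ^ (Q + s.fst))]
    apply tsum_congr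
    intro d
    have : Finite {f : Fin k → ℕ // SF a k f = Q + d} := fiberFinite a J₀ hJ k (Q + d)
    letI : Fintype {f : Fin k → ℕ // SF a k f = Q + d} := Fintype.ofFinite _
    rw [tsum_fintype]
    show (∑ _g : {f : Fin k → ℕ // SF a k f = Q + d}, bb b ^ (Q + d)) = _
    rw [Finset.sum_const, Finset.card_univ, Nat.card_eq_fintype_card, nsmul_eq_mul]
  rw [h3] at h2
  refine le_trans h2 ?_
  -- step 4 : bound the cardinalities
  have h4 : ∀ d : ℕ, (Nat.card {f : Fin k → ℕ // SF a k f = Q + d} : ℝ≥0∞) * bb b ^ (Q + d)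
      ≤ (bb b ^ Q * ((J₀ + Q : ℕ) : ℝ≥0∞) ^ n) * (((d : ℝ≥0∞) + 1) ^ n * 2⁻¹ ^ d) := by
    intro d
    have hc1 : Nat.card {f : Fin k → ℕ // SF a k f = Q + d} ≤ ((J₀ + Q) * (1 + d)) ^ n := by
      calc Nat.card {f : Fin k → ℕ // SF a k f = Q + d} ≤ (J₀ + (Q + d)) ^ k :=
            cardFiber a J₀ hJ k (Q + d)
        _ ≤ (J₀ + (Q + d)) ^ n := Nat.pow_le_pow_right (by omega) hk
        _ ≤ ((J₀ + Q) * (1 + d)) ^ n := by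
            apply Nat.pow_le_pow_left
            have hd : d ≤ (J₀ + Q) * d := Nat.le_mul_of_pos_left d (by omega)
            rw [Nat.mul_add, Nat.mul_one]
            omega
    calc (Nat.card {f : Fin k → ℕ // SF a k f = Q + d} : ℝ≥0∞) * bb b ^ (Q + d)
        ≤ (((J₀ + Q) * (1 + d)) ^ n : ℕ) * bb b ^ (Q + d) := by
          apply mul_le_mul_left
          exact_mod_cast Nat.cast_le.mpr hc1
      _ = (bb b ^ Q * ((J₀ + Q : ℕ) : ℝ≥0∞) ^ n) * (((d : ℝ≥0∞) + 1) ^ n * bb b ^ d) := by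
          have hcast : ((((J₀ + Q) * (1 + d)) ^ n : ℕ) : ℝ≥0∞)
              = (((J₀ + Q : ℕ) : ℝ≥0∞) * ((d : ℝ≥0∞) + 1)) ^ n := by
            push_cast
            ring_nf
          rw [hcast, pow_add, mul_pow]
          ring
      _ ≤ (bb b ^ Q * ((J₀ + Q : ℕ) : ℝ≥0∞) ^ n) * (((d : ℝ≥0∞) + 1) ^ n * 2⁻¹ ^ d) := by
          apply mul_le_mul_right
          apply mul_le_mul_right
          exact pow_le_pow_left' (bb_le_half b hb) _
  calc (∑' d : ℕ, (Nat.card {f : Fin k → ℕ // SF a k f = Q + d} : ℝ≥0∞) * bb b ^ (Q + d))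
      ≤ ∑' d : ℕ, (bb b ^ Q * ((J₀ + Q : ℕ) : ℝ≥0∞) ^ n) * (((d : ℝ≥0∞) + 1) ^ n * 2⁻¹ ^ d) :=
        ENNReal.tsum_le_tsum h4
    _ = (bb b ^ Q * ((J₀ + Q : ℕ) : ℝ≥0∞) ^ n) * kap n := by
        rw [ENNReal.tsum_mul_left, kap]
    _ = bb b ^ Q * ((J₀ + Q : ℕ) : ℝ≥0∞) ^ n * kap n := by ring

include hJ in
lemma tsum_ite_eq_card (k S : ℕ) :
    (∑' f : Fin k → ℕ, if SF a k f = S then bb b ^ S else 0)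
      = (Nat.card {f : Fin k → ℕ // SF a k f = S} : ℝ≥0∞) * bb b ^ S := by
  have h1 : (∑' f : Fin k → ℕ, if SF a k f = S then bb b ^ S else 0)
      = ∑' _f : {f : Fin k → ℕ // SF a k f = S}, bb b ^ S := by
    calc (∑' f : Fin k → ℕ, if SF a k f = S then bb b ^ S else 0)
        = ∑' f : Fin k → ℕ,
            Set.indicator {f : Fin k → ℕ | SF a k f = S} (fun _ => bb b ^ S) f := by
          apply tsum_congr
          intro f
          by_cases h : SF a k f = S
          · rw [if_pos h]
            exact (Set.indicator_of_mem h _).symm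
          · rw [if_neg h]
            exact (Set.indicator_of_notMem h _).symm
      _ = _ := (tsum_subtype _ _).symm
  rw [h1]
  have : Finite {f : Fin k → ℕ // SF a k f = S} := fiberFinite a J₀ hJ k S
  letI : Fintype {f : Fin k → ℕ // SF a k f = S} := Fintype.ofFinite _
  rw [tsum_fintype]
  show (∑ _g : {f : Fin k → ℕ // SF a k f = S}, bb b ^ S) = _
  rw [Finset.sum_const, Finset.card_univ, Nat.card_eq_fintype_card, nsmul_eq_mul]

omit hJ in
lemma X_toReal (hb : 2 ≤ b) : (X b a).toReal = ∑' j : ℕ, (1:ℝ) / (b:ℝ) ^ E a j := by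
  rw [X, ENNReal.tsum_toReal_eq (fun j => bb_pow_ne_top b hb _)]
  apply tsum_congr
  intro j
  rw [ENNReal.toReal_pow, bb, ENNReal.toReal_inv, ENNReal.toReal_natCast, inv_pow, one_div]

end Core


lemma gap_below' (n : ℕ) (hn : 0 < n) (v : Fin n → ℕ) (hv : StrictMono v) (s e : ℕ)
    (he : 0 < e) (he2 : 2 * e < 2 ^ v ⟨0, hn⟩) (hs : s + e = ∑ i, 2 ^ v i) :
    n + 1 ≤ w s := by
  cases n with
  | zero => omega
  | succ n' =>
    have := gap_below n' v hv s e he he2 hs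
    omega

lemma lin_lt_two_pow (c₁ c₂ : ℕ) : ∃ m₁ : ℕ, ∀ m, m₁ ≤ m → c₁ + c₂ * m < 2 ^ (m - 1) := by
  suffices h : ∃ m₁, ∀ m, m₁ ≤ m → (c₁ + c₂ + 1) * (m + 1) < 2 ^ (m - 1) by
    obtain ⟨m₁, h⟩ := h
    refine ⟨m₁, fun m hm => lt_of_le_of_lt ?_ (h m hm)⟩
    have h1 : (c₁ + c₂ + 1) * (m + 1) = c₁ * m + c₂ * m + m + c₁ + c₂ + 1 := by ring
    have h2 : c₂ * m ≤ c₂ * m := le_refl _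
    omega
  set c := c₁ + c₂ + 1 with hc
  have hc1 : 1 ≤ c := by omega
  refine ⟨4 * c + 4, ?_⟩
  intro m hm
  induction m, hm using Nat.le_induction with
  | base =>
    have he : 4 * c + 4 - 1 = 4 * c + 3 := by omega
    rw [he]
    have h1 : c < 2 ^ c := Nat.lt_two_pow_self (n := c)
    have h2c : 2 ≤ 2 ^ c := by
      calc 2 = 2 ^ 1 := (pow_one 2).symm
        _ ≤ 2 ^ c := Nat.pow_le_pow_right (by norm_num) hc1
    have h2 : 4 * c + 4 + 1 < 2 ^ (c + 3) := by
      have h3 : 2 ^ (c + 3) = 2 ^ c * 8 := by rw [pow_add]; norm_num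
      omega
    calc c * (4 * c + 4 + 1) < 2 ^ c * 2 ^ (c + 3) :=
          mul_lt_mul'' h1 h2 (Nat.zero_le _) (Nat.zero_le _)
      _ = 2 ^ (2 * c + 3) := by rw [← pow_add]; ring_nf
      _ ≤ 2 ^ (4 * c + 3) := Nat.pow_le_pow_right (by norm_num) (by omega)
  | succ m hm ih =>
    have hm1 : 1 ≤ m := by omega
    have h1 : 2 ^ (m + 1 - 1) = 2 ^ (m - 1) * 2 := by
      rw [← pow_succ]
      congr 1
      omega
    have h2 : c * (m + 1 + 1) ≤ c * (m + 1) * 2 := by nlinarith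
    omega

set_option maxHeartbeats 2000000 in
theorem core (b : ℕ) (hb : 2 ≤ b) (a : ℕ → ℕ) (J₀ : ℕ)
    (hJ : ∀ j, J₀ ≤ j → j + 1 ≤ E a j)
    (hsel : ∀ n : ℕ, ∀ hn : 0 < n, ∃ K : ℕ, ∀ m₀ : ℕ, ∃ v : Fin n → ℕ, StrictMono v ∧
      (∀ i, ∃ j : ℕ, a j = v i) ∧ m₀ ≤ v ⟨0, hn⟩ ∧ ∀ i, v i + 1 ≤ K * (v ⟨0, hn⟩ + 1)) :
    Transcendental ℚ ((X b a).toReal) := by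
  intro halg
  set x := (X b a).toReal with hx
  have hbR0 : (0:ℝ) < (b:ℝ) := by exact_mod_cast (by omega : 0 < b)
  have hbRne : (b:ℝ) ≠ 0 := ne_of_gt hbR0
  have hZ : IsAlgebraic ℤ x := (IsFractionRing.isAlgebraic_iff ℤ ℚ ℝ).mpr halg
  obtain ⟨P, hP0, hPx⟩ := hZ
  set n := P.natDegree with hn
  set A : ℕ → ℤ := fun k => P.coeff k with hA
  have hn0 : 0 < n := by
    rcases Nat.eq_zero_or_pos n with h | h
    · exfalso
      have hc := Polynomial.eq_C_of_natDegree_eq_zero h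
      rw [hc, Polynomial.aeval_C] at hPx
      have h3 : P.coeff 0 = 0 := by simpa using hPx
      rw [hc, h3] at hP0
      simp at hP0
    · exact h
  have hAn : A n ≠ 0 := by
    rw [hA]
    exact Polynomial.leadingCoeff_ne_zero.mpr hP0
  have hrel : ∑ k ∈ Finset.range (n+1), (A k : ℝ) * x ^ k = 0 := by
    have h1 := Polynomial.aeval_eq_sum_range (R := ℤ) (p := P) x
    rw [hPx] at h1
    rw [← hn] at h1
    have h2 : ∀ k ∈ Finset.range (n+1), (A k : ℝ) * x ^ k = P.coeff k • x ^ k := by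
      intro k _
      rw [zsmul_eq_mul]
    rw [Finset.sum_congr rfl h2]
    exact h1.symm
  have hxk : ∀ k : ℕ, (X b a ^ k).toReal = x ^ k := fun k => ENNReal.toReal_pow _ _
  -- every threshold gives an integer
  have hKey : ∀ L : ℕ, ∃ g : ℤ, (g:ℝ) =
      ∑ k ∈ Finset.range (n+1), (A k : ℝ) * ((b:ℝ)^L * (TL b a k L).toReal) := by
    intro L
    choose N hN using fun k : ℕ => decompR b a J₀ hJ hb k L
    refine ⟨- ∑ k ∈ Finset.range (n+1), A k * (N k : ℤ), ?_⟩
    have h2 : ∑ k ∈ Finset.range (n+1), (A k : ℝ) * ((b:ℝ)^L * x ^ k) = 0 := by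
      have h3 : ∀ k ∈ Finset.range (n+1), (A k : ℝ) * ((b:ℝ)^L * x ^ k)
          = (b:ℝ)^L * ((A k:ℝ) * x ^ k) := fun k _ => by ring
      rw [Finset.sum_congr rfl h3, ← Finset.mul_sum, hrel, mul_zero]
    have h4 : ∀ k ∈ Finset.range (n+1), (A k : ℝ) * ((b:ℝ)^L * x ^ k)
        = (A k : ℝ) * (N k : ℝ) + (A k : ℝ) * ((b:ℝ)^L * (TL b a k L).toReal) := by
      intro k _
      rw [← hxk k, hN k]
      ring
    rw [Finset.sum_congr rfl h4, Finset.sum_add_distrib] at h2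
    push_cast
    linarith [h2]
  -- constants
  set AZ : ℕ := ∑ k ∈ Finset.range (n+1), (A k).natAbs with hAZ
  have hAk_le : ∀ k ∈ Finset.range (n+1), |(A k : ℝ)| ≤ (AZ:ℝ) := by
    intro k hk
    have h1 : (A k).natAbs ≤ AZ :=
      Finset.single_le_sum (f := fun k => (A k).natAbs) (fun _ _ => Nat.zero_le _) hk
    calc |(A k:ℝ)| = ((A k).natAbs : ℝ) := by
          rw [Nat.cast_natAbs, Int.cast_abs]
      _ ≤ (AZ:ℝ) := by exact_mod_cast h1
  set κr : ℝ := (kap n).toReal with hκr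
  have hκr0 : 0 ≤ κr := ENNReal.toReal_nonneg
  obtain ⟨KD, hKD⟩ : ∃ KD : ℕ, (AZ:ℝ) * κr + (AZ:ℝ) + 1 < 2 ^ KD :=
    pow_unbounded_of_one_lt _ (by norm_num : (1:ℝ) < 2)
  obtain ⟨K, hKsel⟩ := hsel n hn0
  obtain ⟨m₁, hm₁⟩ := lin_lt_two_pow (n*(J₀+K+2) + KD + 1) (n*K)
  obtain ⟨v, hv, hvim, hvm₀, hvK⟩ := hKsel (max m₁ 1)
  set m := v ⟨0, hn0⟩ with hm
  have hm1 : 1 ≤ m := le_trans (le_max_right _ _) hvm₀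
  have hmm₁ : m₁ ≤ m := le_trans (le_max_left _ _) hvm₀
  have hK1 : 1 ≤ K := by
    have h1 := hvK ⟨0, hn0⟩
    rcases Nat.eq_zero_or_pos K with h | h
    · rw [h] at h1; omega
    · exact h
  set W := K * (m + 1) with hW
  have hmW : m < W := by
    calc m < m + 1 := Nat.lt_succ_self m
      _ ≤ K * (m+1) := Nat.le_mul_of_pos_left _ hK1
  have hvW : ∀ i, v i < W := fun i => by have := hvK i; omega
  set Sstar := ∑ i, 2 ^ v i with hSstar
  have hSlt : Sstar < 2 ^ W := sum_distinct_lt n v hv W hvW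
  have hwS : w Sstar = n := w_sum_distinct n v hv
  have hmS : 2 ^ m ≤ Sstar := by
    rw [hSstar, hm]
    exact Finset.single_le_sum (f := fun i => 2 ^ v i) (fun _ _ => Nat.zero_le _)
      (Finset.mem_univ _)
  set J := 2 ^ (m - 1) with hJdef
  have h2J : 2 * J = 2 ^ m := by
    rw [hJdef, ← pow_succ']
    congr 1
    omega
  have hJS : J ≤ Sstar := by
    have : J ≤ 2 ^ m := by omega
    omega
  have hJ1 : 1 ≤ J := Nat.one_le_two_pow
  -- exponent bound from the linear lemma
  have hexp : n*(J₀ + W + 2) + KD + 1 < 2 ^ (m-1) := by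
    have h1 := hm₁ m hmm₁
    have h2 : n*(J₀+K+2) + KD + 1 + n*K*m = n*(J₀ + W + 2) + KD + 1 := by
      rw [hW]; ring
    omega
  -- the useful power bound : J₀ + Sstar + 2^m ≤ 2 ^ (J₀ + W + 2)
  have hpow1 : J₀ + Sstar + 2^m ≤ 2 ^ (J₀ + W + 2) := by
    have h1 : J₀ < 2 ^ J₀ := Nat.lt_two_pow_self (n := J₀)
    have h2 : 2 ^ m ≤ 2 ^ W := Nat.pow_le_pow_right (by norm_num) (le_of_lt hmW)
    have h3 : 2 ^ J₀ ≤ 2 ^ (J₀ + W) := Nat.pow_le_pow_right (by norm_num) (by omega)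
    have h4 : 2 ^ W ≤ 2 ^ (J₀ + W) := Nat.pow_le_pow_right (by norm_num) (by omega)
    have h5 : 2 ^ (J₀ + W + 2) = 2 ^ (J₀ + W) * 4 := by rw [pow_add]; norm_num
    omega
  -- weight of tuples
  have hwtuple : ∀ k (f : Fin k → ℕ), w (SF a k f) ≤ k := by
    intro k f
    have h1 : SF a k f = ∑ i, 2 ^ (a (f i)) := rfl
    rw [h1]
    exact w_sum_pows_le k (fun i => a (f i))
  -- === the tail bound at Sstar ===
  set Q := Sstar + 2 ^ m with hQ
  have hτbound : ∀ k, k ≤ n → (b:ℝ)^Sstar * (TL b a k Sstar).toReal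
      ≤ (2:ℝ) ^ (n*(J₀+W+2)) * κr * (1/2:ℝ)^(2^m) := by
    intro k hk
    have hgap : TL b a k Sstar
        = ∑' f : Fin k → ℕ, if Q ≤ SF a k f then bb b ^ SF a k f else 0 := by
      rw [TL]
      apply tsum_congr
      intro f
      rcases lt_or_ge Sstar (SF a k f) with h | h
      · rw [if_pos h, if_pos]
        by_contra hc
        push_neg at hc
        set e := SF a k f - Sstar with he
        have he1 : 0 < e := by omega
        have he2 : e < 2 ^ m := by omega
        have hw2 : w (SF a k f) = n + w e := by
          have h6 := w_sum_add n v hv e (fun h => he2)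
          rw [← hSstar] at h6
          rw [show SF a k f = Sstar + e by omega]
          exact h6
        have h7 := hwtuple k f
        have h8 := w_pos he1
        omega
      · rw [if_neg (not_lt.mpr h), if_neg (by omega)]
    have hb1 := TSbound b a J₀ hJ hb n k Q hk (by omega)
    rw [← hgap] at hb1
    have hb0 : (b:ℝ≥0∞) ≠ 0 := Nat.cast_ne_zero.mpr (by omega)
    have hbtop : (b:ℝ≥0∞) ≠ ⊤ := ENNReal.natCast_ne_top b
    have hcancel : (b:ℝ≥0∞)^Sstar * bb b ^ Sstar = 1 := by
      rw [bb, ← mul_pow, ENNReal.mul_inv_cancel hb0 hbtop, one_pow]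
    have hb2 : (b:ℝ≥0∞)^Sstar * TL b a k Sstar
        ≤ bb b ^ (2^m) * ((J₀+Q:ℕ):ℝ≥0∞)^n * kap n := by
      calc (b:ℝ≥0∞)^Sstar * TL b a k Sstar
          ≤ (b:ℝ≥0∞)^Sstar * (bb b ^ Q * ((J₀+Q:ℕ):ℝ≥0∞)^n * kap n) :=
            mul_le_mul_right hb1 _
        _ = ((b:ℝ≥0∞)^Sstar * bb b ^ Sstar) * (bb b ^ (2^m) * ((J₀+Q:ℕ):ℝ≥0∞)^n * kap n) := by
            rw [hQ, pow_add]
            ring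
        _ = bb b ^ (2^m) * ((J₀+Q:ℕ):ℝ≥0∞)^n * kap n := by
            rw [hcancel, one_mul]
    have hRHSne : bb b ^ (2^m) * ((J₀+Q:ℕ):ℝ≥0∞)^n * kap n ≠ ⊤ :=
      ENNReal.mul_ne_top (ENNReal.mul_ne_top (bb_pow_ne_top b hb _)
        (ENNReal.pow_ne_top (ENNReal.natCast_ne_top _))) (kap_ne_top n)
    have hb3 := ENNReal.toReal_mono hRHSne hb2
    have hLHS : ((b:ℝ≥0∞)^Sstar * TL b a k Sstar).toReal
        = (b:ℝ)^Sstar * (TL b a k Sstar).toReal := by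
      rw [ENNReal.toReal_mul, ENNReal.toReal_pow, ENNReal.toReal_natCast]
    have hRHS : (bb b ^ (2^m) * ((J₀+Q:ℕ):ℝ≥0∞)^n * kap n).toReal
        = ((b:ℝ)⁻¹)^(2^m) * ((J₀+Q:ℕ):ℝ)^n * κr := by
      rw [ENNReal.toReal_mul, ENNReal.toReal_mul, ENNReal.toReal_pow, ENNReal.toReal_pow,
        bb, ENNReal.toReal_inv, ENNReal.toReal_natCast, ENNReal.toReal_natCast, hκr]
    rw [hLHS, hRHS] at hb3
    refine le_trans hb3 ?_
    have hf1 : ((b:ℝ)⁻¹)^(2^m) ≤ (1/2:ℝ)^(2^m) := by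
      apply pow_le_pow_left₀ (by positivity)
      rw [one_div]
      apply inv_anti₀ (by norm_num)
      exact_mod_cast hb
    have hf2 : ((J₀+Q:ℕ):ℝ)^n ≤ (2:ℝ) ^ (n*(J₀+W+2)) := by
      have h1 : ((J₀+Q:ℕ):ℝ) ≤ ((2:ℕ):ℝ)^(J₀+W+2) := by
        have := hpow1
        rw [hQ]
        exact_mod_cast (by omega : J₀ + (Sstar + 2^m) ≤ 2 ^ (J₀ + W + 2))
      calc ((J₀+Q:ℕ):ℝ)^n ≤ (((2:ℕ):ℝ)^(J₀+W+2))^n := by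
            apply pow_le_pow_left₀ (by positivity) h1
        _ = (2:ℝ) ^ (n*(J₀+W+2)) := by
            rw [← pow_mul]
            norm_num
            ring_nf
      -- may need adjustment
    calc ((b:ℝ)⁻¹)^(2^m) * ((J₀+Q:ℕ):ℝ)^n * κr
        ≤ (1/2:ℝ)^(2^m) * ((2:ℝ) ^ (n*(J₀+W+2))) * κr := by
          apply mul_le_mul_of_nonneg_right _ hκr0
          apply mul_le_mul hf1 hf2 (by positivity) (by positivity)
      _ = (2:ℝ) ^ (n*(J₀+W+2)) * κr * (1/2:ℝ)^(2^m) := by ring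
  -- === g0 = 0 ===
  obtain ⟨g0, hg0⟩ := hKey Sstar
  have hτ0 : ∀ k, 0 ≤ (b:ℝ)^Sstar * (TL b a k Sstar).toReal := by
    intro k
    positivity
  have hg0small : |(g0:ℝ)| < 1 := by
    rw [hg0]
    set Bd := (2:ℝ) ^ (n*(J₀+W+2)) * κr * (1/2:ℝ)^(2^m) with hBd
    have hBd0 : 0 ≤ Bd := by positivity
    calc |∑ k ∈ Finset.range (n+1), (A k : ℝ) * ((b:ℝ)^Sstar * (TL b a k Sstar).toReal)|
        ≤ ∑ k ∈ Finset.range (n+1), |(A k : ℝ) * ((b:ℝ)^Sstar * (TL b a k Sstar).toReal)| :=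
          Finset.abs_sum_le_sum_abs _ _
      _ ≤ ∑ k ∈ Finset.range (n+1), ((A k).natAbs : ℝ) * Bd := by
          apply Finset.sum_le_sum
          intro k hk
          rw [abs_mul, abs_of_nonneg (hτ0 k)]
          have hkn : k ≤ n := by
            have := Finset.mem_range.mp hk
            omega
          apply mul_le_mul _ (hτbound k hkn) (hτ0 k) (by positivity)
          rw [Nat.cast_natAbs, Int.cast_abs]
      _ = (AZ:ℝ) * Bd := by
          rw [← Finset.sum_mul, hAZ]
          push_cast
          ring
      _ < 1 := by
          rw [hBd]
          have h1 : (AZ:ℝ) * κr < 2 ^ KD := by nlinarith [hKD, hκr0]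
          have h2 : (AZ:ℝ) * ((2:ℝ) ^ (n*(J₀+W+2)) * κr * (1/2:ℝ)^(2^m))
              = ((AZ:ℝ) * κr * 2 ^ (n*(J₀+W+2))) / ((2:ℝ)^(2^m)) := by
            rw [div_pow, one_pow]
            ring
          rw [h2, div_lt_one (by positivity)]
          calc (AZ:ℝ) * κr * 2 ^ (n*(J₀+W+2)) < 2^KD * 2 ^ (n*(J₀+W+2)) := by
                apply mul_lt_mul_of_pos_right h1 (by positivity)
            _ = 2 ^ (KD + n*(J₀+W+2)) := by rw [pow_add]
            _ ≤ (2:ℝ)^(2^m) := by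
                apply pow_le_pow_right₀ (by norm_num)
                have : 2 ^ (m-1) ≤ 2 ^ m := Nat.pow_le_pow_right (by norm_num) (by omega)
                omega
  have hg00 : g0 = 0 := by
    by_contra h
    have h1 : (1:ℤ) ≤ |g0| := Int.one_le_abs (by omega)
    have h2 : (1:ℝ) ≤ |(g0:ℝ)| := by
      rw [← Int.cast_abs]
      exact_mod_cast h1
    linarith
  -- === fibers at Sstar ===
  set R : ℕ → ℕ := fun k => Nat.card {f : Fin k → ℕ // SF a k f = Sstar} with hR
  have hRk0 : ∀ k, k < n → R k = 0 := by
    intro k hk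
    have hE : IsEmpty {f : Fin k → ℕ // SF a k f = Sstar} := by
      constructor
      intro f
      have h1 := hwtuple k f.val
      rw [f.prop, hwS] at h1
      omega
    rw [hR]
    exact Nat.card_of_isEmpty
  have hRn1 : 1 ≤ R n := by
    choose idx hidx using hvim
    have hfin : Finite {f : Fin n → ℕ // SF a n f = Sstar} := fiberFinite a J₀ hJ n Sstar
    have hne : Nonempty {f : Fin n → ℕ // SF a n f = Sstar} := by
      refine ⟨⟨fun i => idx i, ?_⟩⟩
      show (∑ i, 2 ^ (a (idx i))) = Sstar
      rw [hSstar]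
      exact Finset.sum_congr rfl (fun i _ => by rw [hidx i])
    rw [hR]
    exact Nat.card_pos
  have hRnle : R n ≤ (J₀ + Sstar)^n := cardFiber a J₀ hJ n Sstar
  -- === gap below identity ===
  have hsplitTL : ∀ k, k ≤ n → (TL b a k (Sstar - J)).toReal
      = (R k : ℝ) * ((b:ℝ)⁻¹)^Sstar + (TL b a k Sstar).toReal := by
    intro k hk
    have hE : TL b a k (Sstar - J)
        = (R k : ℝ≥0∞) * bb b ^ Sstar + TL b a k Sstar := by
      rw [TL, TL]
      have hpt : ∀ f : Fin k → ℕ, (if Sstar - J < SF a k f then bb b ^ SF a k f else 0)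
          = (if SF a k f = Sstar then bb b ^ Sstar else 0)
            + (if Sstar < SF a k f then bb b ^ SF a k f else 0) := by
        intro f
        rcases lt_trichotomy (SF a k f) Sstar with h | h | h
        · have hle : SF a k f ≤ Sstar - J := by
            by_contra hc
            push_neg at hc
            set e := Sstar - SF a k f with he
            have he1 : 0 < e := by omega
            have he2 : 2 * e < 2 ^ m := by omega
            have hgb := gap_below' n hn0 v hv (SF a k f) e he1 (by rw [← hm]; exact he2)
              (by rw [← hSstar]; omega)
            have h7 := hwtuple k f
            omega
          rw [if_neg (by omega), if_neg (by omega), if_neg (by omega), add_zero]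
        · rw [if_pos (by omega), if_pos h, if_neg (by omega), add_zero, h]
        · rw [if_pos (by omega), if_neg (by omega), if_pos h, zero_add]
      rw [tsum_congr hpt, ENNReal.tsum_add]
      congr 1
      rw [hR]
      exact tsum_ite_eq_card b a J₀ hJ k Sstar
    rw [hE, ENNReal.toReal_add, ENNReal.toReal_mul, ENNReal.toReal_pow, ENNReal.toReal_natCast,
      bb, ENNReal.toReal_inv, ENNReal.toReal_natCast]
    · exact ENNReal.mul_ne_top (ENNReal.natCast_ne_top _) (bb_pow_ne_top b hb _)
    · exact ne_top_of_le_ne_top (ENNReal.pow_ne_top (X_ne_top b a J₀ hJ hb))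
        (TL_le_Xpow b a J₀ hJ k Sstar)
  -- === the relation for g1 ===
  obtain ⟨g1, hg1⟩ := hKey (Sstar - J)
  have hg1rel : (g1:ℝ) * (b:ℝ)^J = (A n : ℝ) * (R n : ℝ) := by
    have hcancelR : (b:ℝ)^Sstar * ((b:ℝ)⁻¹)^Sstar = 1 := by
      rw [← mul_pow, mul_inv_cancel₀ hbRne, one_pow]
    have h1 : ∀ k ∈ Finset.range (n+1),
        (A k : ℝ) * ((b:ℝ)^(Sstar - J) * (TL b a k (Sstar - J)).toReal) * (b:ℝ)^J
        = (A k : ℝ) * (R k : ℝ) + (A k : ℝ) * ((b:ℝ)^Sstar * (TL b a k Sstar).toReal) := by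
      intro k hk
      have hkn : k ≤ n := by
        have := Finset.mem_range.mp hk
        omega
      have h2 : (b:ℝ)^(Sstar - J) * (b:ℝ)^J = (b:ℝ)^Sstar := by
        rw [← pow_add]
        congr 1
        omega
      calc (A k : ℝ) * ((b:ℝ)^(Sstar - J) * (TL b a k (Sstar - J)).toReal) * (b:ℝ)^J
          = (A k : ℝ) * (((b:ℝ)^(Sstar-J) * (b:ℝ)^J) * (TL b a k (Sstar - J)).toReal) := by
            ring
        _ = (A k : ℝ) * ((b:ℝ)^Sstar * ((R k : ℝ) * ((b:ℝ)⁻¹)^Sstar + (TL b a k Sstar).toReal)) := by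
            rw [h2, hsplitTL k hkn]
        _ = (A k : ℝ) * (R k : ℝ) * ((b:ℝ)^Sstar * ((b:ℝ)⁻¹)^Sstar)
              + (A k : ℝ) * ((b:ℝ)^Sstar * (TL b a k Sstar).toReal) := by
            ring
        _ = (A k : ℝ) * (R k : ℝ) + (A k : ℝ) * ((b:ℝ)^Sstar * (TL b a k Sstar).toReal) := by
            rw [hcancelR, mul_one]
    calc (g1:ℝ) * (b:ℝ)^J
        = (∑ k ∈ Finset.range (n+1),
            (A k : ℝ) * ((b:ℝ)^(Sstar - J) * (TL b a k (Sstar - J)).toReal)) * (b:ℝ)^J := by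
          rw [hg1]
      _ = ∑ k ∈ Finset.range (n+1),
            (A k : ℝ) * ((b:ℝ)^(Sstar - J) * (TL b a k (Sstar - J)).toReal) * (b:ℝ)^J := by
          rw [Finset.sum_mul]
      _ = ∑ k ∈ Finset.range (n+1), ((A k : ℝ) * (R k : ℝ)
            + (A k : ℝ) * ((b:ℝ)^Sstar * (TL b a k Sstar).toReal)) :=
          Finset.sum_congr rfl h1
      _ = (∑ k ∈ Finset.range (n+1), (A k : ℝ) * (R k : ℝ))
            + ∑ k ∈ Finset.range (n+1), (A k : ℝ) * ((b:ℝ)^Sstar * (TL b a k Sstar).toReal) :=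
          Finset.sum_add_distrib
      _ = (∑ k ∈ Finset.range (n+1), (A k : ℝ) * (R k : ℝ)) + 0 := by
          rw [← hg0, hg00]
          norm_num
      _ = (A n : ℝ) * (R n : ℝ) := by
          rw [add_zero]
          rw [Finset.sum_eq_single_of_mem n (Finset.self_mem_range_succ n)]
          intro k hk hkn
          have : R k = 0 := hRk0 k (by
            have := Finset.mem_range.mp hk
            omega)
          rw [this]
          norm_num
  have hg1int : g1 * (b:ℤ)^J = A n * (R n : ℤ) := by exact_mod_cast hg1rel
  have hRn0 : (R n : ℤ) ≠ 0 := by exact_mod_cast (by omega : R n ≠ 0)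
  have hg1ne : g1 ≠ 0 := by
    intro h
    rw [h, zero_mul] at hg1int
    exact (mul_ne_zero hAn hRn0) hg1int.symm
  -- size bounds
  have hAnAZ : (A n).natAbs ≤ AZ :=
    Finset.single_le_sum (f := fun k => (A k).natAbs) (fun _ _ => Nat.zero_le _)
      (Finset.self_mem_range_succ n)
  have hsize : (b:ℤ)^J ≤ (AZ : ℤ) * ((J₀ + Sstar)^n : ℕ) := by
    have h1 : (b:ℤ)^J ≤ |g1| * (b:ℤ)^J := by
      have h2 : (1:ℤ) ≤ |g1| := Int.one_le_abs (by omega)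
      exact le_mul_of_one_le_left (by positivity) h2
    have h3 : |g1| * (b:ℤ)^J = |g1 * (b:ℤ)^J| := by
      rw [abs_mul, abs_pow, abs_of_nonneg (by positivity : (0:ℤ) ≤ (b:ℤ))]
    have h4 : |A n * (R n:ℤ)| = ((A n).natAbs : ℤ) * (R n : ℤ) := by
      rw [abs_mul, Int.abs_eq_natAbs, abs_of_nonneg (by positivity : (0:ℤ) ≤ (R n:ℤ))]
    calc (b:ℤ)^J ≤ |g1| * (b:ℤ)^J := h1
      _ = |g1 * (b:ℤ)^J| := h3
      _ = |A n * (R n:ℤ)| := by rw [hg1int]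
      _ = ((A n).natAbs : ℤ) * (R n : ℤ) := h4
      _ ≤ (AZ : ℤ) * ((J₀ + Sstar)^n : ℕ) := by
          apply mul_le_mul
          · exact_mod_cast hAnAZ
          · exact_mod_cast hRnle
          · positivity
          · positivity
  have hnat : AZ * (J₀ + Sstar)^n < b^J := by
    have hAZ2 : AZ < 2^KD := by
      have h1 : (AZ:ℝ) < 2^KD := by nlinarith [hKD, hκr0, mul_nonneg (Nat.cast_nonneg AZ : (0:ℝ) ≤ (AZ:ℝ)) hκr0]
      exact_mod_cast h1
    have hJS2 : J₀ + Sstar ≤ 2 ^ (J₀ + W + 2) := by omega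
    calc AZ * (J₀ + Sstar)^n ≤ AZ * (2 ^ (J₀ + W + 2))^n :=
          Nat.mul_le_mul_left _ (Nat.pow_le_pow_left hJS2 n)
      _ < 2^KD * (2 ^ (J₀ + W + 2))^n := by
          have hp : 0 < (2 ^ (J₀ + W + 2))^n := by positivity
          exact (Nat.mul_lt_mul_right hp).mpr hAZ2
      _ = 2 ^ (KD + n * (J₀ + W + 2)) := by
          rw [← pow_mul, ← pow_add]
          ring_nf
      _ ≤ 2 ^ (2 ^ (m-1)) := Nat.pow_le_pow_right (by norm_num) (by omega)
      _ ≤ b ^ J := by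
          rw [hJdef]
          exact Nat.pow_le_pow_left hb _
  have hfinal : (b:ℤ)^J ≤ (AZ : ℤ) * ((J₀ + Sstar)^n : ℕ) := hsize
  have hfinal2 : ((AZ * (J₀ + Sstar)^n : ℕ) : ℤ) < ((b^J : ℕ) : ℤ) := by exact_mod_cast hnat
  push_cast at hfinal2
  push_cast at hfinal
  linarith


open Filter Real

section Specific

variable (η : ℝ) (hη : 2/3 < η)

/-- the exponent function of the problem -/
noncomputable def aη (η : ℝ) (j : ℕ) : ℕ := ⌊((j:ℝ) + 1) ^ η⌋₊

include hη in
lemma H1 : ∃ J₀ : ℕ, ∀ j, J₀ ≤ j → j + 1 ≤ E (aη η) j := by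
  have hη23 : (0:ℝ) < 2/3 := by norm_num
  have hlog2 : (0:ℝ) < Real.log 2 := Real.log_pos (by norm_num)
  -- eventually (in real t) : log t / log 2 + 2 ≤ t ^ (2/3)
  have hev1 : ∀ᶠ t : ℝ in atTop, ‖Real.log t‖ ≤ (Real.log 2 / 2) * ‖t ^ ((2:ℝ)/3)‖ :=
    (isLittleO_log_rpow_atTop hη23).def (by positivity)
  have hev2 : ∀ᶠ t : ℝ in atTop, (4:ℝ) ≤ t ^ ((2:ℝ)/3) :=
    (tendsto_rpow_atTop hη23).eventually_ge_atTop 4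
  have hev3 : ∀ᶠ t : ℝ in atTop, (1:ℝ) ≤ t := eventually_ge_atTop 1
  have hev : ∀ᶠ t : ℝ in atTop, Real.log t / Real.log 2 + 2 ≤ t ^ ((2:ℝ)/3) := by
    filter_upwards [hev1, hev2, hev3] with t h1 h2 h3
    have hl0 : 0 ≤ Real.log t := Real.log_nonneg h3
    have hr0 : 0 ≤ t ^ ((2:ℝ)/3) := by positivity
    rw [Real.norm_eq_abs, Real.norm_eq_abs, abs_of_nonneg hl0, abs_of_nonneg hr0] at h1
    have h4 : Real.log t / Real.log 2 ≤ t ^ ((2:ℝ)/3) / 2 := by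
      rw [div_le_div_iff₀ hlog2 (by norm_num)]
      nlinarith
    nlinarith
  -- transfer to ℕ
  have htend : Tendsto (fun j : ℕ => (j:ℝ) + 1) atTop atTop :=
    tendsto_atTop_add_const_right _ 1 tendsto_natCast_atTop_atTop
  have hevN : ∀ᶠ j : ℕ in atTop,
      Real.log ((j:ℝ)+1) / Real.log 2 + 2 ≤ ((j:ℝ)+1) ^ ((2:ℝ)/3) := htend.eventually hev
  obtain ⟨J₀, hJ₀⟩ := eventually_atTop.mp hevN
  refine ⟨J₀, fun j hj => ?_⟩
  have h1 := hJ₀ j hj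
  set t : ℝ := (j:ℝ) + 1 with ht
  have ht1 : (1:ℝ) ≤ t := by
    rw [ht]
    have : (0:ℝ) ≤ (j:ℝ) := Nat.cast_nonneg j
    linarith
  -- Nat.log 2 (j+1) + 2 ≤ t ^ η, hence ≤ aη j
  have h2 : ((Nat.log 2 (j+1) : ℝ)) ≤ Real.log t / Real.log 2 := by
    have h3 := Real.natLog_le_logb (j+1) 2
    rw [Real.logb] at h3
    have h4 : ((j+1 : ℕ):ℝ) = t := by
      rw [ht]
      push_cast
      ring
    rw [h4] at h3
    exact_mod_cast h3
  have h5 : t ^ ((2:ℝ)/3) ≤ t ^ η :=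
    Real.rpow_le_rpow_of_exponent_le ht1 (le_of_lt hη)
  have h6 : ((Nat.log 2 (j+1) + 2 : ℕ) : ℝ) ≤ t ^ η := by
    push_cast
    linarith
  have h7 : Nat.log 2 (j+1) + 2 ≤ aη η j := by
    rw [aη]
    exact Nat.le_floor h6
  have h8 : j + 1 < 2 ^ (Nat.log 2 (j+1) + 1) := Nat.lt_pow_succ_log_self (by norm_num) (j+1)
  have h9 : 2 ^ (Nat.log 2 (j+1) + 1) ≤ 2 ^ (aη η j) :=
    Nat.pow_le_pow_right (by norm_num) (by omega)
  show j + 1 ≤ 2 ^ (aη η j)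
  omega

-- (8 : ℝ) ^ (2/3 : ℝ) = 4 and similar rpow computations
lemma rpow_23_of_pow3 (c : ℕ) : ((2:ℝ) ^ (3 * c : ℕ)) ^ ((2:ℝ)/3) = (2:ℝ) ^ (2 * c : ℕ) := by
  rw [← Real.rpow_natCast 2 (3 * c), ← Real.rpow_mul (by norm_num : (0:ℝ) ≤ 2),
    ← Real.rpow_natCast 2 (2 * c)]
  congr 1
  push_cast
  ring

lemma two_rpow_ge (η : ℝ) (hη : 2/3 < η) : (3/2:ℝ) ≤ (2:ℝ) ^ η := by
  have h1 : (2:ℝ) ^ ((2:ℝ)/3) ≤ (2:ℝ) ^ η :=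
    Real.rpow_le_rpow_of_exponent_le (by norm_num) (le_of_lt hη)
  have h2 : (3/2:ℝ) ≤ (2:ℝ) ^ ((2:ℝ)/3) := by
    have h3 : ((2:ℝ) ^ ((2:ℝ)/3)) ^ (3:ℕ) = 4 := by
      rw [← Real.rpow_natCast ((2:ℝ) ^ ((2:ℝ)/3)) 3, ← Real.rpow_mul (by norm_num : (0:ℝ) ≤ 2)]
      norm_num
    have h4 : (0:ℝ) ≤ (2:ℝ) ^ ((2:ℝ)/3) := by positivity
    by_contra hcon
    push_neg at hcon
    have h5 : ((2:ℝ) ^ ((2:ℝ)/3)) ^ (3:ℕ) < (3/2:ℝ) ^ (3:ℕ) :=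
      pow_lt_pow_left₀ hcon h4 (by norm_num)
    rw [h3] at h5
    norm_num at h5
  linarith

include hη in
lemma H2 (n : ℕ) (hn : 0 < n) : ∃ K : ℕ, ∀ m₀ : ℕ, ∃ v : Fin n → ℕ, StrictMono v ∧
    (∀ i, ∃ j : ℕ, aη η j = v i) ∧ m₀ ≤ v ⟨0, hn⟩ ∧ ∀ i, v i + 1 ≤ K * (v ⟨0, hn⟩ + 1) := by
  have hη0 : (0:ℝ) < η := by linarith
  refine ⟨⌈(2:ℝ) ^ ((n:ℝ) * η)⌉₊, fun m₀ => ?_⟩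
  set j₀ : ℕ := 2 ^ (3 * (m₀ + 1)) with hj₀
  have hj₀1 : 1 ≤ j₀ := Nat.one_le_two_pow
  -- the underlying ℕ-indexed sequence
  set u : ℕ → ℕ := fun i => ⌊((2^i * j₀ : ℕ):ℝ) ^ η⌋₊ with hu
  -- basic facts about the real values
  have hbase : ∀ i : ℕ, ((2:ℝ)^(3:ℕ)) ≤ ((2^i * j₀ : ℕ):ℝ) := by
    intro i
    have h1 : 2^3 ≤ j₀ := by
      rw [hj₀]
      exact Nat.pow_le_pow_right (by norm_num) (by omega)
    have h2 : j₀ ≤ 2^i * j₀ := Nat.le_mul_of_pos_left _ (Nat.pow_pos (by norm_num))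
    exact_mod_cast le_trans h1 h2
  have hbase1 : ∀ i : ℕ, (1:ℝ) ≤ ((2^i * j₀ : ℕ):ℝ) := by
    intro i
    have := hbase i
    norm_num at this ⊢
    linarith
  have hs2 : ∀ i : ℕ, (2:ℝ) ≤ ((2^i * j₀ : ℕ):ℝ) ^ η := by
    intro i
    have h1 : ((2:ℝ)^(3:ℕ)) ^ ((2:ℝ)/3) ≤ ((2^i * j₀ : ℕ):ℝ) ^ ((2:ℝ)/3) :=
      Real.rpow_le_rpow (by positivity) (hbase i) (by norm_num)
    have h2 : ((2:ℝ)^(3:ℕ)) ^ ((2:ℝ)/3) = 4 := by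
      have := rpow_23_of_pow3 1
      norm_num at this
      convert this using 2 <;> norm_num
    have h3 : ((2^i * j₀ : ℕ):ℝ) ^ ((2:ℝ)/3) ≤ ((2^i * j₀ : ℕ):ℝ) ^ η :=
      Real.rpow_le_rpow_of_exponent_le (hbase1 i) (le_of_lt hη)
    linarith
  -- strict monotonicity of u
  have humono : ∀ i : ℕ, u i < u (i+1) := by
    intro i
    have hcast : ((2^(i+1) * j₀ : ℕ):ℝ) = 2 * ((2^i * j₀ : ℕ):ℝ) := by
      push_cast
      ring
    have hrw : ((2^(i+1) * j₀ : ℕ):ℝ) ^ η = (2:ℝ)^η * ((2^i * j₀ : ℕ):ℝ) ^ η := by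
      rw [hcast, Real.mul_rpow (by norm_num) (by positivity)]
    set s := ((2^i * j₀ : ℕ):ℝ) ^ η with hs
    have hs0 : 0 ≤ s := by positivity
    have h1 : s + 1 ≤ (2:ℝ)^η * s := by
      have h2 := two_rpow_ge η hη
      have h3 := hs2 i
      nlinarith
    have h4 : ⌊s⌋₊ + 1 ≤ ⌊(2:ℝ)^η * s⌋₊ := by
      have h5 : ⌊s + 1⌋₊ ≤ ⌊(2:ℝ)^η * s⌋₊ := Nat.floor_le_floor h1
      rw [Nat.floor_add_one hs0] at h5
      exact h5
    rw [hu]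
    simp only
    rw [hrw, ← hs]
    omega
  have humono' : StrictMono u := strictMono_nat_of_lt_succ humono
  refine ⟨fun i => u i.val, fun i j hij => humono' (by exact_mod_cast hij), ?_, ?_, ?_⟩
  · -- image
    intro i
    refine ⟨2^(i:ℕ) * j₀ - 1, ?_⟩
    rw [aη, hu]
    simp only
    congr 2
    have h1 : 0 < 2^(i:ℕ) * j₀ := by positivity
    have h2 : (2^(i:ℕ) * j₀ - 1 : ℕ) + 1 = 2^(i:ℕ) * j₀ := by omega
    rw [show ((2^(i:ℕ) * j₀ - 1 : ℕ):ℝ) + 1 = (((2^(i:ℕ) * j₀ - 1 : ℕ) + 1 : ℕ):ℝ) by push_cast; ring,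
      h2]
  · -- m₀ ≤ v 0
    show m₀ ≤ u 0
    rw [hu]
    simp only [pow_zero, one_mul]
    apply Nat.le_floor
    have h1 : ((j₀:ℕ):ℝ) ^ ((2:ℝ)/3) ≤ ((j₀:ℕ):ℝ) ^ η :=
      Real.rpow_le_rpow_of_exponent_le (by exact_mod_cast hj₀1) (le_of_lt hη)
    have h2 : ((j₀:ℕ):ℝ) ^ ((2:ℝ)/3) = (2:ℝ) ^ (2 * (m₀+1) : ℕ) := by
      rw [hj₀]
      have := rpow_23_of_pow3 (m₀ + 1)
      rw [← this]
      congr 1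
      push_cast
      ring
    have h3 : (m₀ : ℝ) ≤ (2:ℝ) ^ (2 * (m₀+1) : ℕ) := by
      have h4 : m₀ < 2 ^ (2 * (m₀+1)) := by
        calc m₀ < 2 ^ m₀ := Nat.lt_two_pow_self (n := m₀)
          _ ≤ 2 ^ (2 * (m₀+1)) := Nat.pow_le_pow_right (by norm_num) (by omega)
      exact_mod_cast le_of_lt h4
    linarith
  · -- growth bound
    intro i
    have hK : (2:ℝ) ^ ((n:ℝ) * η) ≤ (⌈(2:ℝ) ^ ((n:ℝ) * η)⌉₊ : ℝ) := Nat.le_ceil _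
    have h1 : (u i.val : ℝ) ≤ ((2^(i.val) * j₀ : ℕ):ℝ) ^ η := by
      rw [hu]
      simp only
      exact Nat.floor_le (by positivity)
    have h2 : ((2^(i.val) * j₀ : ℕ):ℝ) ^ η = ((2:ℝ)^(i.val:ℕ)) ^ η * ((j₀:ℕ):ℝ) ^ η := by
      push_cast
      rw [Real.mul_rpow (by positivity) (by positivity)]
    have h3 : ((2:ℝ)^(i.val:ℕ)) ^ η ≤ (2:ℝ) ^ ((n:ℝ) * η) := by
      rw [← Real.rpow_natCast 2 i.val, ← Real.rpow_mul (by norm_num : (0:ℝ) ≤ 2)]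
      apply Real.rpow_le_rpow_of_exponent_le (by norm_num)
      have : (i.val : ℝ) ≤ (n:ℝ) := by
        have := i.isLt
        exact_mod_cast le_of_lt this
      nlinarith [hη0]
    have h4 : ((j₀:ℕ):ℝ) ^ η < (u 0 : ℝ) + 1 := by
      rw [hu]
      simp only [pow_zero, one_mul]
      exact Nat.lt_floor_add_one _
    have h5 : (u i.val : ℝ) < (⌈(2:ℝ) ^ ((n:ℝ) * η)⌉₊ : ℝ) * ((u 0 : ℝ) + 1) := by
      have hj0pow : (0:ℝ) ≤ ((j₀:ℕ):ℝ) ^ η := by positivity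
      have h6 : (0:ℝ) < (2:ℝ) ^ ((n:ℝ) * η) := by positivity
      calc (u i.val : ℝ) ≤ ((2:ℝ)^(i.val:ℕ)) ^ η * ((j₀:ℕ):ℝ) ^ η := by
            rw [← h2]
            exact h1
        _ ≤ (2:ℝ) ^ ((n:ℝ) * η) * ((j₀:ℕ):ℝ) ^ η := by
            apply mul_le_mul_of_nonneg_right h3 hj0pow
        _ < (2:ℝ) ^ ((n:ℝ) * η) * ((u 0 : ℝ) + 1) := by
            apply mul_lt_mul_of_pos_left h4 h6
        _ ≤ (⌈(2:ℝ) ^ ((n:ℝ) * η)⌉₊ : ℝ) * ((u 0 : ℝ) + 1) := by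
            apply mul_le_mul_of_nonneg_right hK
            positivity
    show u i.val + 1 ≤ ⌈(2:ℝ) ^ ((n:ℝ) * η)⌉₊ * (u 0 + 1)
    have h7 : u i.val < ⌈(2:ℝ) ^ ((n:ℝ) * η)⌉₊ * (u 0 + 1) := by
      exact_mod_cast (by push_cast at h5 ⊢; linarith : (u i.val : ℝ) < ((⌈(2:ℝ) ^ ((n:ℝ) * η)⌉₊ * (u 0 + 1) : ℕ) : ℝ))
    omega

end Specific

end Stmt2Aux

/-- Let `b ≥ 2` be an integer. For any real `η > 2/3`, the number
`∑_{j≥1} b^{-n_j}` with `n_j = 2^{⌊j^η⌋}` is transcendental. (Here the sum over `j ≥ 1`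
is written as a sum over `j : ℕ` via `j ↦ j + 1`.) -/
theorem stmt_2 (b : ℕ) (hb : 2 ≤ b) (η : ℝ) (hη : 2 / 3 < η) :
    Transcendental ℚ
      (∑' j : ℕ, (1 : ℝ) / (b : ℝ) ^ (2 ^ ⌊((j : ℝ) + 1) ^ η⌋₊)) := by
  obtain ⟨J₀, hJ⟩ := Stmt2Aux.H1 η hη
  have hcore := Stmt2Aux.core b hb (Stmt2Aux.aη η) J₀ hJ
    (fun n hn => Stmt2Aux.H2 η hη n hn)
  have hXr : (Stmt2Aux.X b (Stmt2Aux.aη η)).toReal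
      = ∑' j : ℕ, (1 : ℝ) / (b : ℝ) ^ (2 ^ ⌊((j : ℝ) + 1) ^ η⌋₊) :=
    Stmt2Aux.X_toReal b (Stmt2Aux.aη η) hb
  rw [← hXr]
  exact hcore
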